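/- arXiv:1907.08409 — 6 statements merged into one kernel-verified Lean document; each statement's English description precedes it below -/
import Mathlib

section
/- Let J be a real 4×4 matrix with Jᵀ = −J and J² = −I₄ (i.e., an orthogonal complex structure on ℝ⁴). Then exactly one of the following holds: either there is a unique unit vector a ∈ ℝ³ with J = K⁺(a), or there is a unique unit vector a ∈ ℝ³ with J = K⁻(a). (Thus the complex structures on ℝ⁴ compatible with the metric are parametrized by the disjoint union of the unit spheres of Λ²₊ and Λ²₋, realizing the two twistor fibres.) -/
open Matrix

/-- The matrix of `K_{s₁⁺}`: e₁↦e₂, e₂↦−e₁, e₃↦e₄, e₄↦−e₃. -/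
def J1p : Matrix (Fin 4) (Fin 4) ℝ := !![0,-1,0,0; 1,0,0,0; 0,0,0,-1; 0,0,1,0]
/-- The matrix of `K_{s₂⁺}`: e₁↦e₃, e₃↦−e₁, e₄↦e₂, e₂↦−e₄. -/
def J2p : Matrix (Fin 4) (Fin 4) ℝ := !![0,0,-1,0; 0,0,0,1; 1,0,0,0; 0,-1,0,0]
/-- The matrix of `K_{s₃⁺}`: e₁↦e₄, e₄↦−e₁, e₂↦e₃, e₃↦−e₂. -/
def J3p : Matrix (Fin 4) (Fin 4) ℝ := !![0,0,0,-1; 0,0,-1,0; 0,1,0,0; 1,0,0,0]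
/-- The matrix of `K_{s₁⁻}`: e₁↦e₂, e₂↦−e₁, e₃↦−e₄, e₄↦e₃. -/
def J1m : Matrix (Fin 4) (Fin 4) ℝ := !![0,-1,0,0; 1,0,0,0; 0,0,0,1; 0,0,-1,0]
/-- The matrix of `K_{s₂⁻}`: e₁↦e₃, e₃↦−e₁, e₄↦−e₂, e₂↦e₄. -/
def J2m : Matrix (Fin 4) (Fin 4) ℝ := !![0,0,-1,0; 0,0,0,-1; 1,0,0,0; 0,1,0,0]
/-- The matrix of `K_{s₃⁻}`: e₁↦e₄, e₄↦−e₁, e₂↦−e₃, e₃↦e₂. -/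
def J3m : Matrix (Fin 4) (Fin 4) ℝ := !![0,0,0,-1; 0,0,1,0; 0,-1,0,0; 1,0,0,0]

/-- `K⁺(a) = a₁J₁⁺ + a₂J₂⁺ + a₃J₃⁺`. -/
def Kp (a : Fin 3 → ℝ) : Matrix (Fin 4) (Fin 4) ℝ := a 0 • J1p + a 1 • J2p + a 2 • J3p
/-- `K⁻(a) = a₁J₁⁻ + a₂J₂⁻ + a₃J₃⁻`. -/
def Km (a : Fin 3 → ℝ) : Matrix (Fin 4) (Fin 4) ℝ := a 0 • J1m + a 1 • J2m + a 2 • J3m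

lemma kp_eq (a : Fin 3 → ℝ) :
    Kp a = !![0, -a 0, -a 1, -a 2; a 0, 0, -a 2, a 1; a 1, a 2, 0, -a 0; a 2, -a 1, a 0, 0] := by
  ext i j; fin_cases i <;> fin_cases j <;> simp [Kp, J1p, J2p, J3p, Matrix.vecHead, Matrix.vecTail]

lemma km_eq (a : Fin 3 → ℝ) :
    Km a = !![0, -a 0, -a 1, -a 2; a 0, 0, a 2, -a 1; a 1, -a 2, 0, a 0; a 2, a 1, -a 0, 0] := by
  ext i j; fin_cases i <;> fin_cases j <;> simp [Km, J1m, J2m, J3m, Matrix.vecHead, Matrix.vecTail]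


lemma key (a0 a1 a2 x y z : ℝ)
    (h1 : a0^2 + a1^2 + a2^2 = 1)
    (h2 : a0^2 + x^2 + y^2 = 1)
    (h3 : a1^2 + x^2 + z^2 = 1)
    (h4 : a2^2 + y^2 + z^2 = 1)
    (e1 : a1*x + a2*y = 0)
    (e2 : a0*x - a2*z = 0)
    (e3 : a0*y + a1*z = 0) :
    (x = a2 ∧ y = -a1 ∧ z = a0) ∨ (x = -a2 ∧ y = a1 ∧ z = -a0) := by
  have hx2 : x^2 = a2^2 := by linarith
  have hy2 : y^2 = a1^2 := by linarith
  have hz2 : z^2 = a0^2 := by linarith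
  have q1 : a1*a2*x*y = -(a1^2*a2^2) := by
    have h : a1*x = -(a2*y) := by linarith
    calc a1*a2*x*y = (a1*x)*(a2*y) := by ring
      _ = -(a2*y)*(a2*y) := by rw [h]
      _ = -(a2^2*y^2) := by ring
      _ = -(a1^2*a2^2) := by rw [hy2]; ring
  have q2 : a0*a2*x*z = a0^2*a2^2 := by
    have h : a0*x = a2*z := by linarith
    calc a0*a2*x*z = (a0*x)*(a2*z) := by ring
      _ = (a2*z)*(a2*z) := by rw [h]
      _ = a2^2*z^2 := by ring
      _ = a0^2*a2^2 := by rw [hz2]; ring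
  have q3 : a0*a1*y*z = -(a0^2*a1^2) := by
    have h : a0*y = -(a1*z) := by linarith
    calc a0*a1*y*z = (a0*y)*(a1*z) := by ring
      _ = -(a1*z)*(a1*z) := by rw [h]
      _ = -(a1^2*z^2) := by ring
      _ = -(a0^2*a1^2) := by rw [hz2]; ring
  have hs2 : (a2*x - a1*y + a0*z - 1) * (a2*x - a1*y + a0*z + 1) = 0 := by
    linear_combination a2^2*hx2 + a1^2*hy2 + a0^2*hz2 - 2*q1 + 2*q2 - 2*q3 + (a0^2+a1^2+a2^2+1)*h1
  rcases mul_eq_zero.mp hs2 with h | h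
  · left
    have hsum : (x - a2)^2 + (y + a1)^2 + (z - a0)^2 = 0 := by
      linear_combination hx2 + hy2 + hz2 + 2*h1 - 2*h
    have e1' : (x - a2)^2 = 0 := by linarith [sq_nonneg (x - a2), sq_nonneg (y + a1), sq_nonneg (z - a0)]
    have e2' : (y + a1)^2 = 0 := by linarith [sq_nonneg (x - a2), sq_nonneg (y + a1), sq_nonneg (z - a0)]
    have e3' : (z - a0)^2 = 0 := by linarith [sq_nonneg (x - a2), sq_nonneg (y + a1), sq_nonneg (z - a0)]
    have f1 := pow_eq_zero_iff (n := 2) (by norm_num) |>.mp e1'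
    have f2 := pow_eq_zero_iff (n := 2) (by norm_num) |>.mp e2'
    have f3 := pow_eq_zero_iff (n := 2) (by norm_num) |>.mp e3'
    refine ⟨by linarith, by linarith, by linarith⟩
  · right
    have hsum : (x + a2)^2 + (y - a1)^2 + (z + a0)^2 = 0 := by
      linear_combination hx2 + hy2 + hz2 + 2*h1 + 2*h
    have e1' : (x + a2)^2 = 0 := by linarith [sq_nonneg (x + a2), sq_nonneg (y - a1), sq_nonneg (z + a0)]
    have e2' : (y - a1)^2 = 0 := by linarith [sq_nonneg (x + a2), sq_nonneg (y - a1), sq_nonneg (z + a0)]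
    have e3' : (z + a0)^2 = 0 := by linarith [sq_nonneg (x + a2), sq_nonneg (y - a1), sq_nonneg (z + a0)]
    have f1 := pow_eq_zero_iff (n := 2) (by norm_num) |>.mp e1'
    have f2 := pow_eq_zero_iff (n := 2) (by norm_num) |>.mp e2'
    have f3 := pow_eq_zero_iff (n := 2) (by norm_num) |>.mp e3'
    refine ⟨by linarith, by linarith, by linarith⟩


lemma kp_ne_km (a b : Fin 3 → ℝ) (ha : a ⬝ᵥ a = 1) : Kp a ≠ Km b := by
  intro h
  rw [kp_eq, km_eq] at h
  have e1 := congrFun (congrFun h 1) 0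
  have e2 := congrFun (congrFun h 2) 0
  have e3 := congrFun (congrFun h 3) 0
  have f1 := congrFun (congrFun h 3) 2
  have f2 := congrFun (congrFun h 3) 1
  have f3 := congrFun (congrFun h 2) 1
  simp [Matrix.vecHead, Matrix.vecTail] at e1 e2 e3 f1 f2 f3
  simp [dotProduct, Fin.sum_univ_three] at ha
  have h0 : a 0 = 0 := by linarith
  have h1 : a 1 = 0 := by linarith
  have h2 : a 2 = 0 := by linarith
  rw [h0, h1, h2] at ha; norm_num at ha

/-- Every orthogonal complex structure J on ℝ⁴ (Jᵀ = −J, J² = −I₄) is either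
K⁺(a) for a unique unit a ∈ ℝ³, or K⁻(a) for a unique unit a ∈ ℝ³, and not both. -/
theorem stmt5 :
    ∀ J : Matrix (Fin 4) (Fin 4) ℝ, Jᵀ = -J → J * J = -1 →
      Xor' (∃! a : Fin 3 → ℝ, a ⬝ᵥ a = 1 ∧ J = Kp a)
           (∃! a : Fin 3 → ℝ, a ⬝ᵥ a = 1 ∧ J = Km a) := by
  intro J hsk hsq
  have hE : ∀ i j : Fin 4, J j i = -J i j := by
    intro i j
    have := congrFun (congrFun hsk i) j
    simpa using this
  have d0 : J 0 0 = 0 := by have := hE 0 0; linarith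
  have d1 : J 1 1 = 0 := by have := hE 1 1; linarith
  have d2 : J 2 2 = 0 := by have := hE 2 2; linarith
  have d3 : J 3 3 = 0 := by have := hE 3 3; linarith
  have hJ : J = !![0, -J 1 0, -J 2 0, -J 3 0; J 1 0, 0, -J 2 1, -J 3 1;
      J 2 0, J 2 1, 0, -J 3 2; J 3 0, J 3 1, J 3 2, 0] := by
    ext i j
    fin_cases i <;> fin_cases j <;>
      simp [Matrix.vecHead, Matrix.vecTail, d0, d1, d2, d3, hE 1 0, hE 2 0, hE 3 0,
        hE 2 1, hE 3 1, hE 3 2]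
  rw [hJ] at hsq
  have m00 := congrFun (congrFun hsq 0) 0
  have m11 := congrFun (congrFun hsq 1) 1
  have m22 := congrFun (congrFun hsq 2) 2
  have m33 := congrFun (congrFun hsq 3) 3
  have m01 := congrFun (congrFun hsq 0) 1
  have m02 := congrFun (congrFun hsq 0) 2
  have m03 := congrFun (congrFun hsq 0) 3
  simp [Matrix.mul_apply, Fin.sum_univ_four, Matrix.vecHead, Matrix.vecTail,
    Matrix.one_apply] at m00 m11 m22 m33 m01 m02 m03
  obtain ⟨hx, hy, hz⟩ | ⟨hx, hy, hz⟩ := key (J 1 0) (J 2 0) (J 3 0) (J 2 1) (J 3 1) (J 3 2)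
    (by linear_combination -m00) (by linear_combination -m11) (by linear_combination -m22)
    (by linear_combination -m33) (by linear_combination -m01) (by linear_combination m02)
    (by linear_combination m03)
  · have hKp : J = Kp ![J 1 0, J 2 0, J 3 0] := by
      rw [hJ, kp_eq, hx, hy, hz]
      ext i j
      fin_cases i <;> fin_cases j <;> simp [Matrix.vecHead, Matrix.vecTail]
    refine Or.inl ⟨⟨![J 1 0, J 2 0, J 3 0], ⟨?_, hKp⟩, ?_⟩, ?_⟩
    · simp [dotProduct, Fin.sum_univ_three]
      linear_combination -m00
    · rintro b ⟨hb1, hb2⟩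
      have h2 := hb2.symm.trans hJ
      rw [kp_eq] at h2
      have e0 := congrFun (congrFun h2 1) 0
      have e1 := congrFun (congrFun h2 2) 0
      have e2 := congrFun (congrFun h2 3) 0
      simp [Matrix.vecHead, Matrix.vecTail] at e0 e1 e2
      funext i
      fin_cases i <;> simp [e0, e1, e2]
    · rintro ⟨b, ⟨hb1, hb2⟩, -⟩
      exact kp_ne_km ![J 1 0, J 2 0, J 3 0] b
        (by simp [dotProduct, Fin.sum_univ_three]; linear_combination -m00)
        (hKp.symm.trans hb2)
  · have hKm : J = Km ![J 1 0, J 2 0, J 3 0] := by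
      rw [hJ, km_eq, hx, hy, hz]
      ext i j
      fin_cases i <;> fin_cases j <;> simp [Matrix.vecHead, Matrix.vecTail]
    refine Or.inr ⟨⟨![J 1 0, J 2 0, J 3 0], ⟨?_, hKm⟩, ?_⟩, ?_⟩
    · simp [dotProduct, Fin.sum_univ_three]
      linear_combination -m00
    · rintro b ⟨hb1, hb2⟩
      have h2 := hb2.symm.trans hJ
      rw [km_eq] at h2
      have e0 := congrFun (congrFun h2 1) 0
      have e1 := congrFun (congrFun h2 2) 0
      have e2 := congrFun (congrFun h2 3) 0
      simp [Matrix.vecHead, Matrix.vecTail] at e0 e1 e2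
      funext i
      fin_cases i <;> simp [e0, e1, e2]
    · rintro ⟨b, ⟨hb1, hb2⟩, -⟩
      exact kp_ne_km b ![J 1 0, J 2 0, J 3 0] hb1 (hb2.symm.trans hKm)
end

section
/- Let a, b ∈ ℝ³ be unit vectors and set P := K⁺(a)K⁻(b). Then P is symmetric (Pᵀ = P), orthogonal, satisfies P² = I₄ and tr P = 0, and P ≠ ±I₄; consequently its (+1)-eigenspace and its (−1)-eigenspace are each 2-dimensional. Moreover both eigenspaces are invariant under K⁺(a) and under K⁻(b). -/
open Matrix

private lemma traceMulVecLin (M : Matrix (Fin 4) (Fin 4) ℝ) :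
    LinearMap.trace ℝ (Fin 4 → ℝ) M.mulVecLin = M.trace := by
  rw [← Matrix.toLin'_apply', LinearMap.trace_eq_matrix_trace ℝ (Pi.basisFun ℝ (Fin 4)),
    LinearMap.toMatrix_eq_toMatrix', LinearMap.toMatrix'_toLin']

private lemma eigdim (P : Matrix (Fin 4) (Fin 4) ℝ) (hsq : P * P = 1) (htr : P.trace = 0)
    (μ : ℝ) (hμ : μ * μ = 1) :
    Module.finrank ℝ (Module.End.eigenspace P.mulVecLin μ) = 2 := by
  set E := Module.End.eigenspace P.mulVecLin μ with hE
  set Q : Matrix (Fin 4) (Fin 4) ℝ := (1/2 : ℝ) • (1 + μ • P) with hQ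
  have hmem : ∀ x : Fin 4 → ℝ, x ∈ E ↔ P *ᵥ x = μ • x := by
    intro x
    rw [hE, Module.End.mem_eigenspace_iff, Matrix.mulVecLin_apply]
  have hPQ : P * Q = μ • Q := by
    rw [hQ, mul_smul_comm, mul_add, mul_one, mul_smul_comm, hsq]
    match_scalars <;>
      first
        | ring1
        | linear_combination ((1:ℝ)/2) * hμ
        | linear_combination (-(1:ℝ)/2) * hμ
  have hproj : LinearMap.IsProj E Q.mulVecLin := by
    constructor
    · intro x
      rw [hmem, Matrix.mulVecLin_apply, Matrix.mulVec_mulVec, hPQ, Matrix.smul_mulVec]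
    · intro x hx
      rw [hmem] at hx
      rw [Matrix.mulVecLin_apply, hQ, Matrix.smul_mulVec, Matrix.add_mulVec,
        Matrix.one_mulVec, Matrix.smul_mulVec, hx, smul_smul, hμ, one_smul,
        ← two_smul ℝ x, smul_smul]
      norm_num
  have htrQ := hproj.trace
  rw [traceMulVecLin, hQ, Matrix.trace_smul, Matrix.trace_add, Matrix.trace_smul, htr,
    Matrix.trace_one] at htrQ
  have : ((Module.finrank ℝ E : ℝ)) = 2 := by
    rw [← htrQ]; norm_num
  exact_mod_cast this

set_option maxHeartbeats 2000000 in
/-- For unit a, b ∈ ℝ³, P = K⁺(a)K⁻(b) is a symmetric orthogonal involution with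
trace 0, P ≠ ±I₄, its (±1)-eigenspaces are 2-dimensional, and both eigenspaces are
invariant under K⁺(a) and K⁻(b). -/
theorem stmt6 (a b : Fin 3 → ℝ) (ha : a ⬝ᵥ a = 1) (hb : b ⬝ᵥ b = 1) :
    (Kp a * Km b)ᵀ = Kp a * Km b ∧
    (Kp a * Km b)ᵀ * (Kp a * Km b) = 1 ∧
    (Kp a * Km b) * (Kp a * Km b) = 1 ∧
    (Kp a * Km b).trace = 0 ∧
    Kp a * Km b ≠ 1 ∧ Kp a * Km b ≠ -1 ∧
    Module.finrank ℝ (Module.End.eigenspace (Kp a * Km b).mulVecLin 1) = 2 ∧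
    Module.finrank ℝ (Module.End.eigenspace (Kp a * Km b).mulVecLin (-1)) = 2 ∧
    (∀ μ : ℝ, μ = 1 ∨ μ = -1 →
      ∀ x ∈ Module.End.eigenspace (Kp a * Km b).mulVecLin μ,
        Kp a *ᵥ x ∈ Module.End.eigenspace (Kp a * Km b).mulVecLin μ ∧
        Km b *ᵥ x ∈ Module.End.eigenspace (Kp a * Km b).mulVecLin μ) := by
  have ha' : a 0 * a 0 + a 1 * a 1 + a 2 * a 2 = 1 := by
    simpa [dotProduct, Fin.sum_univ_three] using ha
  have hb' : b 0 * b 0 + b 1 * b 1 + b 2 * b 2 = 1 := by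
    simpa [dotProduct, Fin.sum_univ_three] using hb
  have hKp : Kp a = !![0, -a 0, -a 1, -a 2; a 0, 0, -a 2, a 1; a 1, a 2, 0, -a 0;
      a 2, -a 1, a 0, 0] := by
    ext i j
    fin_cases i <;> fin_cases j <;>
      simp [Kp, J1p, J2p, J3p, Matrix.vecHead, Matrix.vecTail]
  have hKm : Km b = !![0, -b 0, -b 1, -b 2; b 0, 0, b 2, -b 1; b 1, -b 2, 0, b 0;
      b 2, b 1, -b 0, 0] := by
    ext i j
    fin_cases i <;> fin_cases j <;>
      simp [Km, J1m, J2m, J3m, Matrix.vecHead, Matrix.vecTail]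
  have hsymm : (Kp a * Km b)ᵀ = Kp a * Km b := by
    ext i j
    fin_cases i <;> fin_cases j <;>
      simp [hKp, hKm, Matrix.mul_apply, Fin.sum_univ_four] <;>
      ring
  have hsq : (Kp a * Km b) * (Kp a * Km b) = 1 := by
    ext i j
    fin_cases i <;> fin_cases j <;>
      simp [hKp, hKm, Matrix.mul_apply, Matrix.one_apply, Fin.sum_univ_four] <;>
      first
        | ring1
        | linear_combination (b 0 * b 0 + b 1 * b 1 + b 2 * b 2) * ha' + hb'
  have htr : (Kp a * Km b).trace = 0 := by
    simp [Matrix.trace, Matrix.diag, hKp, hKm, Matrix.mul_apply, Fin.sum_univ_four]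
    ring
  have hcomm : Kp a * Km b = Km b * Kp a := by
    ext i j
    fin_cases i <;> fin_cases j <;>
      simp [hKp, hKm, Matrix.mul_apply, Fin.sum_univ_four] <;>
      ring
  refine ⟨hsymm, by rw [hsymm]; exact hsq, hsq, htr, ?_, ?_, ?_, ?_, ?_⟩
  · intro h
    have := congrArg Matrix.trace h
    rw [htr, Matrix.trace_one] at this
    norm_num at this
  · intro h
    have := congrArg Matrix.trace h
    rw [htr] at this
    simp [Matrix.trace_neg, Matrix.trace_one] at this
  · exact eigdim _ hsq htr 1 (by norm_num)
  · exact eigdim _ hsq htr (-1) (by norm_num)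
  · intro μ _ x hx
    rw [Module.End.mem_eigenspace_iff, Matrix.mulVecLin_apply] at hx
    have hKpc : (Kp a * Km b) * Kp a = Kp a * (Kp a * Km b) := by
      rw [mul_assoc, ← hcomm]
    have hKmc : (Kp a * Km b) * Km b = Km b * (Kp a * Km b) := by
      rw [hcomm, mul_assoc, hcomm]
    constructor <;>
      rw [Module.End.mem_eigenspace_iff, Matrix.mulVecLin_apply, Matrix.mulVec_mulVec]
    · rw [hKpc, ← Matrix.mulVec_mulVec, hx, Matrix.mulVec_smul]
    · rw [hKmc, ← Matrix.mulVec_mulVec, hx, Matrix.mulVec_smul]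
end

section
/- Let a, b ∈ ℝ³ be unit vectors. Then there exists an orthonormal basis (E₁, E₂, E₃, E₄) of ℝ⁴ with det[E₁ E₂ E₃ E₄] = 1 (a positively oriented orthonormal basis) such that K⁺(a)E₁ = E₂, K⁻(b)E₁ = E₂, K⁺(a)E₃ = E₄ and K⁻(b)E₃ = −E₄. In particular, setting P = K⁺(a)K⁻(b), one has PE₁ = −E₁, PE₂ = −E₂, PE₃ = E₃, PE₄ = E₄. -/
open Matrix

lemma Kp_eq (a : Fin 3 → ℝ) :
    Kp a = !![0,-a 0,-a 1,-a 2; a 0,0,-a 2,a 1; a 1,a 2,0,-a 0; a 2,-a 1,a 0,0] := by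
  ext i j
  fin_cases i <;> fin_cases j <;>
    simp [Kp, J1p, J2p, J3p, Matrix.vecHead, Matrix.vecTail]

lemma Km_eq (b : Fin 3 → ℝ) :
    Km b = !![0,-b 0,-b 1,-b 2; b 0,0,b 2,-b 1; b 1,-b 2,0,b 0; b 2,b 1,-b 0,0] := by
  ext i j
  fin_cases i <;> fin_cases j <;>
    simp [Km, J1m, J2m, J3m, Matrix.vecHead, Matrix.vecTail]

lemma adjdot (M : Matrix (Fin 4) (Fin 4) ℝ) (x y : Fin 4 → ℝ) :
    (M *ᵥ x) ⬝ᵥ y = x ⬝ᵥ (Mᵀ *ᵥ y) := by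
  rw [Matrix.dotProduct_mulVec, Matrix.vecMul_transpose]

lemma skewself (M : Matrix (Fin 4) (Fin 4) ℝ) (h : Mᵀ = -M) (x : Fin 4 → ℝ) :
    x ⬝ᵥ (M *ᵥ x) = 0 := by
  have h1 : (M *ᵥ x) ⬝ᵥ x = x ⬝ᵥ (Mᵀ *ᵥ x) := adjdot M x x
  rw [h, Matrix.neg_mulVec, dotProduct_neg, dotProduct_comm] at h1
  linarith

lemma orthdot (M : Matrix (Fin 4) (Fin 4) ℝ) (h : Mᵀ * M = 1) (x y : Fin 4 → ℝ) :
    (M *ᵥ x) ⬝ᵥ (M *ᵥ y) = x ⬝ᵥ y := by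
  rw [adjdot, Matrix.mulVec_mulVec, h, Matrix.one_mulVec]

lemma eigorth (P : Matrix (Fin 4) (Fin 4) ℝ) (hsym : Pᵀ = P) (x y : Fin 4 → ℝ)
    (hx : P *ᵥ x = -x) (hy : P *ᵥ y = y) : x ⬝ᵥ y = 0 := by
  have h1 : (P *ᵥ x) ⬝ᵥ y = x ⬝ᵥ (Pᵀ *ᵥ y) := adjdot P x y
  rw [hx, hsym, hy, neg_dotProduct] at h1
  linarith

set_option maxHeartbeats 1600000 in
lemma det_fin_four' (M : Matrix (Fin 4) (Fin 4) ℝ) :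
    M.det =
      M 0 0 * (M 1 1 * (M 2 2 * M 3 3 - M 2 3 * M 3 2) - M 1 2 * (M 2 1 * M 3 3 - M 2 3 * M 3 1) + M 1 3 * (M 2 1 * M 3 2 - M 2 2 * M 3 1))
    - M 0 1 * (M 1 0 * (M 2 2 * M 3 3 - M 2 3 * M 3 2) - M 1 2 * (M 2 0 * M 3 3 - M 2 3 * M 3 0) + M 1 3 * (M 2 0 * M 3 2 - M 2 2 * M 3 0))
    + M 0 2 * (M 1 0 * (M 2 1 * M 3 3 - M 2 3 * M 3 1) - M 1 1 * (M 2 0 * M 3 3 - M 2 3 * M 3 0) + M 1 3 * (M 2 0 * M 3 1 - M 2 1 * M 3 0))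
    - M 0 3 * (M 1 0 * (M 2 1 * M 3 2 - M 2 2 * M 3 1) - M 1 1 * (M 2 0 * M 3 2 - M 2 2 * M 3 0) + M 1 2 * (M 2 0 * M 3 1 - M 2 1 * M 3 0)) := by
  rw [Matrix.det_succ_row_zero]
  simp only [Fin.sum_univ_four, Matrix.det_fin_three, Matrix.submatrix_apply, Fin.val_zero,
    Fin.val_one, Fin.val_two,
    show (Fin.succ (2:Fin 3)) = (3:Fin 4) from rfl,
    show (Fin.castSucc (2:Fin 3)) = (2:Fin 4) from rfl,
    show ((3:Fin 4):ℕ) = 3 from rfl,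
    Fin.succAbove, Fin.lt_def]
  norm_num
  ring

lemma detid (a : Fin 3 → ℝ) (v w : Fin 4 → ℝ) :
    (Matrix.of fun i j => ![v, Kp a *ᵥ v, w, Kp a *ᵥ w] j i).det =
      (v ⬝ᵥ v) * (w ⬝ᵥ w) - (v ⬝ᵥ w)^2 - ((Kp a *ᵥ v) ⬝ᵥ w)^2
      + ((v ⬝ᵥ v) * (w ⬝ᵥ w) - (v ⬝ᵥ w)^2) * (a ⬝ᵥ a - 1) := by
  rw [det_fin_four']
  simp [Kp_eq, Matrix.mulVec, dotProduct, Fin.sum_univ_four, Fin.sum_univ_three,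
    Matrix.vecHead, Matrix.vecTail]
  ring

/-- For unit a, b ∈ ℝ³ there is a positively oriented orthonormal basis (E₁,E₂,E₃,E₄)
of ℝ⁴ with K⁺(a)E₁ = K⁻(b)E₁ = E₂, K⁺(a)E₃ = E₄, K⁻(b)E₃ = −E₄; in particular
P = K⁺(a)K⁻(b) satisfies PE₁ = −E₁, PE₂ = −E₂, PE₃ = E₃, PE₄ = E₄. -/
theorem stmt7 (a b : Fin 3 → ℝ) (ha : a ⬝ᵥ a = 1) (hb : b ⬝ᵥ b = 1) :
    ∃ E : Fin 4 → (Fin 4 → ℝ),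
      (∀ i j, E i ⬝ᵥ E j = if i = j then 1 else 0) ∧
      (Matrix.of fun i j => E j i).det = 1 ∧
      Kp a *ᵥ E 0 = E 1 ∧ Km b *ᵥ E 0 = E 1 ∧
      Kp a *ᵥ E 2 = E 3 ∧ Km b *ᵥ E 2 = -E 3 ∧
      (Kp a * Km b) *ᵥ E 0 = -E 0 ∧ (Kp a * Km b) *ᵥ E 1 = -E 1 ∧
      (Kp a * Km b) *ᵥ E 2 = E 2 ∧ (Kp a * Km b) *ᵥ E 3 = E 3 := by
  have ha' : a 0 * a 0 + a 1 * a 1 + a 2 * a 2 = 1 := by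
    simpa [dotProduct, Fin.sum_univ_three] using ha
  have hb' : b 0 * b 0 + b 1 * b 1 + b 2 * b 2 = 1 := by
    simpa [dotProduct, Fin.sum_univ_three] using hb
  have hKp2 : Kp a * Kp a = -1 := by
    rw [Kp_eq]; ext i j
    fin_cases i <;> fin_cases j <;>
      simp [Matrix.mul_apply, Fin.sum_univ_four, Matrix.one_apply] <;>
      first
      | ring1
      | linear_combination ha'
      | linear_combination -ha'
      | linear_combination (2:ℝ)*ha'
      | linear_combination (-2:ℝ)*ha'
  have hKm2 : Km b * Km b = -1 := by
    rw [Km_eq]; ext i j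
    fin_cases i <;> fin_cases j <;>
      simp [Matrix.mul_apply, Fin.sum_univ_four, Matrix.one_apply] <;>
      first
      | ring1
      | linear_combination hb'
      | linear_combination -hb'
      | linear_combination (2:ℝ)*hb'
      | linear_combination (-2:ℝ)*hb'
  have hcomm : Km b * Kp a = Kp a * Km b := by
    rw [Kp_eq, Km_eq]; ext i j
    fin_cases i <;> fin_cases j <;>
      simp [Matrix.mul_apply, Fin.sum_univ_four] <;> ring
  have hKpT : (Kp a)ᵀ = -(Kp a) := by
    rw [Kp_eq]; ext i j
    fin_cases i <;> fin_cases j <;> simp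
  have hKmT : (Km b)ᵀ = -(Km b) := by
    rw [Km_eq]; ext i j
    fin_cases i <;> fin_cases j <;> simp
  have hKpO : (Kp a)ᵀ * Kp a = 1 := by
    rw [hKpT, neg_mul, hKp2]; simp
  set P := Kp a * Km b with hP
  have hPP : P * P = 1 := by
    calc P * P = Kp a * (Km b * Kp a) * Km b := by rw [hP]; noncomm_ring
    _ = Kp a * (Kp a * Km b) * Km b := by rw [hcomm]
    _ = (Kp a * Kp a) * (Km b * Km b) := by noncomm_ring
    _ = 1 := by rw [hKp2, hKm2]; simp
  have hPT : Pᵀ = P := by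
    rw [hP, Matrix.transpose_mul, hKpT, hKmT, neg_mul, mul_neg, neg_neg, hcomm]
  have htr : P.trace = 0 := by
    rw [hP, Kp_eq, Km_eq]
    simp [Matrix.trace, Matrix.diag, Matrix.mul_apply, Fin.sum_univ_four]
    ring
  have hP1 : P ≠ 1 := by
    intro h; rw [h] at htr
    simp [Matrix.trace_one] at htr
  have hPm1 : P ≠ -1 := by
    intro h; rw [h] at htr
    simp [Matrix.trace_one] at htr
  have hex1 : ∃ w, P *ᵥ w ≠ w := by
    by_contra h; push_neg at h
    apply hP1; ext i j
    have := congrFun (h (Pi.single j 1)) i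
    simpa [Matrix.mulVec_single, Matrix.one_apply, Pi.single_apply] using this
  have hex2 : ∃ w, P *ᵥ w ≠ -w := by
    by_contra h; push_neg at h
    apply hPm1; ext i j
    have := congrFun (h (Pi.single j 1)) i
    simpa [Matrix.mulVec_single, Matrix.one_apply, Matrix.neg_apply, Pi.single_apply,
      eq_comm] using this
  obtain ⟨w1, hw1⟩ := hex1
  obtain ⟨w2, hw2⟩ := hex2
  set v := P *ᵥ w1 - w1 with hvdef
  set u := P *ᵥ w2 + w2 with hudef
  have hvne : v ≠ 0 := sub_ne_zero.mpr hw1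
  have hune : u ≠ 0 := by
    intro h
    apply hw2
    rw [hudef] at h
    linear_combination (norm := module) h
  have hPv : P *ᵥ v = -v := by
    rw [hvdef, Matrix.mulVec_sub, Matrix.mulVec_mulVec, hPP, Matrix.one_mulVec]
    module
  have hPu : P *ᵥ u = u := by
    rw [hudef, Matrix.mulVec_add, Matrix.mulVec_mulVec, hPP, Matrix.one_mulVec]
    module
  have dot_self_pos : ∀ x : Fin 4 → ℝ, x ≠ 0 → 0 < x ⬝ᵥ x := by
    intro x hx
    have h1 : x ⬝ᵥ x ≠ 0 := fun h => hx ((dotProduct_self_eq_zero).mp h)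
    have h2 : 0 ≤ x ⬝ᵥ x := Finset.sum_nonneg fun i _ => mul_self_nonneg _
    exact lt_of_le_of_ne h2 (Ne.symm h1)
  have hvpos := dot_self_pos v hvne
  have hupos := dot_self_pos u hune
  set c := (Real.sqrt (v ⬝ᵥ v))⁻¹ with hc
  set d := (Real.sqrt (u ⬝ᵥ u))⁻¹ with hd
  set E0 := c • v with hE0
  set E2 := d • u with hE2
  have hsv : Real.sqrt (v ⬝ᵥ v) ≠ 0 := by positivity
  have hsu : Real.sqrt (u ⬝ᵥ u) ≠ 0 := by positivity
  have hE0n : E0 ⬝ᵥ E0 = 1 := by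
    rw [hE0, smul_dotProduct, dotProduct_smul, smul_eq_mul, smul_eq_mul, hc]
    rw [show v ⬝ᵥ v = Real.sqrt (v ⬝ᵥ v) * Real.sqrt (v ⬝ᵥ v) from
      (Real.mul_self_sqrt (le_of_lt hvpos)).symm]
    field_simp
    rw [Real.sqrt_sq (Real.sqrt_nonneg _)]
  have hE2n : E2 ⬝ᵥ E2 = 1 := by
    rw [hE2, smul_dotProduct, dotProduct_smul, smul_eq_mul, smul_eq_mul, hd]
    rw [show u ⬝ᵥ u = Real.sqrt (u ⬝ᵥ u) * Real.sqrt (u ⬝ᵥ u) from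
      (Real.mul_self_sqrt (le_of_lt hupos)).symm]
    field_simp
    rw [Real.sqrt_sq (Real.sqrt_nonneg _)]
  have hPE0 : P *ᵥ E0 = -E0 := by
    rw [hE0, Matrix.mulVec_smul, hPv, smul_neg]
  have hPE2 : P *ᵥ E2 = E2 := by
    rw [hE2, Matrix.mulVec_smul, hPu]
  set E1 := Kp a *ᵥ E0 with hE1
  set E3 := Kp a *ᵥ E2 with hE3
  have hPK : P * Kp a = Kp a * P := by
    calc P * Kp a = Kp a * (Km b * Kp a) := by rw [hP]; noncomm_ring
    _ = Kp a * (Kp a * Km b) := by rw [hcomm]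
    _ = Kp a * P := by rw [hP]
  have hPE1 : P *ᵥ E1 = -E1 := by
    rw [hE1, Matrix.mulVec_mulVec, hPK, ← Matrix.mulVec_mulVec, hPE0, Matrix.mulVec_neg]
  have hPE3 : P *ᵥ E3 = E3 := by
    rw [hE3, Matrix.mulVec_mulVec, hPK, ← Matrix.mulVec_mulVec, hPE2]
  have hKPP : Kp a * P = -(Km b) := by
    calc Kp a * P = (Kp a * Kp a) * Km b := by rw [hP]; noncomm_ring
    _ = -(Km b) := by rw [hKp2]; simp
  have hKmE0 : Km b *ᵥ E0 = E1 := by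
    have h1 : Kp a *ᵥ (P *ᵥ E0) = Kp a *ᵥ (-E0) := by rw [hPE0]
    rw [Matrix.mulVec_mulVec, hKPP, Matrix.neg_mulVec, Matrix.mulVec_neg] at h1
    rw [← hE1] at h1
    exact neg_injective h1
  have hKmE2 : Km b *ᵥ E2 = -E3 := by
    have h1 : Kp a *ᵥ (P *ᵥ E2) = Kp a *ᵥ E2 := by rw [hPE2]
    rw [Matrix.mulVec_mulVec, hKPP, Matrix.neg_mulVec, ← hE3] at h1
    rw [← h1, neg_neg]
  -- orthonormality facts
  have h01 : E0 ⬝ᵥ E1 = 0 := skewself (Kp a) hKpT E0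
  have h23 : E2 ⬝ᵥ E3 = 0 := skewself (Kp a) hKpT E2
  have h11 : E1 ⬝ᵥ E1 = 1 := by rw [hE1, orthdot (Kp a) hKpO, hE0n]
  have h33 : E3 ⬝ᵥ E3 = 1 := by rw [hE3, orthdot (Kp a) hKpO, hE2n]
  have h02 : E0 ⬝ᵥ E2 = 0 := eigorth P hPT E0 E2 hPE0 hPE2
  have h03 : E0 ⬝ᵥ E3 = 0 := eigorth P hPT E0 E3 hPE0 hPE3
  have h12 : E1 ⬝ᵥ E2 = 0 := eigorth P hPT E1 E2 hPE1 hPE2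
  have h13 : E1 ⬝ᵥ E3 = 0 := eigorth P hPT E1 E3 hPE1 hPE3
  refine ⟨![E0, E1, E2, E3], ?_, ?_, ?_, ?_, ?_, ?_, ?_, ?_, ?_, ?_⟩
  · intro i j
    fin_cases i <;> fin_cases j <;>
      simp [hE0n, h11, hE2n, h33, h01, h02, h03, h12, h13, h23,
        dotProduct_comm E1 E0, dotProduct_comm E2 E0,
        dotProduct_comm E3 E0, dotProduct_comm E2 E1,
        dotProduct_comm E3 E1, dotProduct_comm E3 E2]
  · show (Matrix.of fun i j => ![E0, E1, E2, E3] j i).det = 1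
    rw [hE1, hE3, detid a E0 E2, hE0n, hE2n, h02, ha]
    have h12' : (Kp a *ᵥ E0) ⬝ᵥ E2 = 0 := by rw [← hE1]; exact h12
    rw [h12']
    norm_num
  · show Kp a *ᵥ E0 = E1; exact hE1.symm
  · show Km b *ᵥ E0 = E1; exact hKmE0
  · show Kp a *ᵥ E2 = E3; exact hE3.symm
  · show Km b *ᵥ E2 = -E3; exact hKmE2
  · show P *ᵥ E0 = -E0; exact hPE0
  · show P *ᵥ E1 = -E1; exact hPE1
  · show P *ᵥ E2 = E2; exact hPE2
  · show P *ᵥ E3 = E3; exact hPE3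
end

section
/- Let ℛ be a self-adjoint linear endomorphism of ℝ³×ℝ³ (with the standard inner product) and let t₂ > 0. Then the following are equivalent: (i) for all unit vectors a, b ∈ ℝ³, every w ∈ ℝ³ with w·b = 0, and all X, Z ∈ ℝ⁴, one has t₂⟨ℛ(0,w), ω(X,Z) − ω(PX,PZ)⟩ = ⟨K⁻(w)X, Z⟩, where P := K⁺(a)K⁻(b); (ii) ℛ(0,w) = (0, t₂⁻¹ w) for every w ∈ ℝ³. -/
open Matrix

/-- The coordinate vector of the 2-vector X∧Y in the basis (s₁⁺,s₂⁺,s₃⁺,s₁⁻,s₂⁻,s₃⁻):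
ω(X,Y) = ((½⟨JᵢX,Y⟩)ᵢ for the self-dual part, (½⟨JᵢX,Y⟩)ᵢ for the anti-self-dual part). -/
noncomputable def omega (X Y : Fin 4 → ℝ) : (Fin 3 → ℝ) × (Fin 3 → ℝ) :=
  (![(1/2) * ((J1p *ᵥ X) ⬝ᵥ Y), (1/2) * ((J2p *ᵥ X) ⬝ᵥ Y), (1/2) * ((J3p *ᵥ X) ⬝ᵥ Y)],
   ![(1/2) * ((J1m *ᵥ X) ⬝ᵥ Y), (1/2) * ((J2m *ᵥ X) ⬝ᵥ Y), (1/2) * ((J3m *ᵥ X) ⬝ᵥ Y)])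

/-- The standard inner product on ℝ³ × ℝ³. -/
def ip (x y : (Fin 3 → ℝ) × (Fin 3 → ℝ)) : ℝ := x.1 ⬝ᵥ y.1 + x.2 ⬝ᵥ y.2

set_option maxHeartbeats 4000000 in
/-- For a self-adjoint ℛ on ℝ³×ℝ³ and t₂ > 0, the pointwise Gil-Medrano condition D₁
for the distribution 𝒟₄ (second identity (D-1) of the paper) holds exactly when
ℛ(0,w) = (0, t₂⁻¹w) for all w ∈ ℝ³. -/
theorem stmt11 (R : ((Fin 3 → ℝ) × (Fin 3 → ℝ)) →ₗ[ℝ] ((Fin 3 → ℝ) × (Fin 3 → ℝ)))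
    (hR : ∀ x y, ip (R x) y = ip x (R y)) (t₂ : ℝ) (ht₂ : 0 < t₂) :
    (∀ a b : Fin 3 → ℝ, a ⬝ᵥ a = 1 → b ⬝ᵥ b = 1 →
      ∀ w : Fin 3 → ℝ, w ⬝ᵥ b = 0 → ∀ X Z : Fin 4 → ℝ,
        t₂ * ip (R (0, w))
            (omega X Z - omega ((Kp a * Km b) *ᵥ X) ((Kp a * Km b) *ᵥ Z)) =
          (Km w *ᵥ X) ⬝ᵥ Z) ↔
    (∀ w : Fin 3 → ℝ, R (0, w) = (0, t₂⁻¹ • w)) := by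
  have hne : t₂ ≠ 0 := ht₂.ne'
  constructor
  · intro H
    have hP01 : Kp ![1,0,0] * Km ![0,1,0] = !![0,0,0,1; 0,0,-1,0; 0,-1,0,0; 1,0,0,0] := by
      ext i j
      fin_cases i <;> fin_cases j <;> norm_num [Kp, Km, J1p, J2p, J3p, J1m, J2m, J3m, Matrix.mul_apply, Fin.sum_univ_four,
        Matrix.cons_val', Matrix.cons_val_zero, Matrix.cons_val_one, Matrix.head_cons,
        Matrix.cons_val_two, Matrix.tail_cons, Matrix.cons_val_three, Matrix.head_fin_const,
        Matrix.empty_val', Matrix.cons_val_fin_one, Matrix.of_apply, Matrix.smul_apply,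
        Matrix.add_apply, Matrix.vecHead, Matrix.vecTail, Function.comp]
    have hP12 : Kp ![0,1,0] * Km ![0,0,1] = !![0,1,0,0; 1,0,0,0; 0,0,0,-1; 0,0,-1,0] := by
      ext i j
      fin_cases i <;> fin_cases j <;> norm_num [Kp, Km, J1p, J2p, J3p, J1m, J2m, J3m, Matrix.mul_apply, Fin.sum_univ_four,
        Matrix.cons_val', Matrix.cons_val_zero, Matrix.cons_val_one, Matrix.head_cons,
        Matrix.cons_val_two, Matrix.tail_cons, Matrix.cons_val_three, Matrix.head_fin_const,
        Matrix.empty_val', Matrix.cons_val_fin_one, Matrix.of_apply, Matrix.smul_apply,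
        Matrix.add_apply, Matrix.vecHead, Matrix.vecTail, Function.comp]
    have hP02 : Kp ![1,0,0] * Km ![0,0,1] = !![0,0,-1,0; 0,0,0,-1; -1,0,0,0; 0,-1,0,0] := by
      ext i j
      fin_cases i <;> fin_cases j <;> norm_num [Kp, Km, J1p, J2p, J3p, J1m, J2m, J3m, Matrix.mul_apply, Fin.sum_univ_four,
        Matrix.cons_val', Matrix.cons_val_zero, Matrix.cons_val_one, Matrix.head_cons,
        Matrix.cons_val_two, Matrix.tail_cons, Matrix.cons_val_three, Matrix.head_fin_const,
        Matrix.empty_val', Matrix.cons_val_fin_one, Matrix.of_apply, Matrix.smul_apply,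
        Matrix.add_apply, Matrix.vecHead, Matrix.vecTail, Function.comp]
    have hP10 : Kp ![0,1,0] * Km ![1,0,0] = !![0,0,0,-1; 0,0,-1,0; 0,-1,0,0; -1,0,0,0] := by
      ext i j
      fin_cases i <;> fin_cases j <;> norm_num [Kp, Km, J1p, J2p, J3p, J1m, J2m, J3m, Matrix.mul_apply, Fin.sum_univ_four,
        Matrix.cons_val', Matrix.cons_val_zero, Matrix.cons_val_one, Matrix.head_cons,
        Matrix.cons_val_two, Matrix.tail_cons, Matrix.cons_val_three, Matrix.head_fin_const,
        Matrix.empty_val', Matrix.cons_val_fin_one, Matrix.of_apply, Matrix.smul_apply,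
        Matrix.add_apply, Matrix.vecHead, Matrix.vecTail, Function.comp]
    have he0 : R (0, ![(1:ℝ),0,0]) = (0, t₂⁻¹ • ![(1:ℝ),0,0]) := by
      have h1 := H ![1,0,0] ![0,1,0] (by norm_num [dotProduct, Fin.sum_univ_three, Matrix.cons_val_two])
        (by norm_num [dotProduct, Fin.sum_univ_three, Matrix.cons_val_two]) ![1,0,0]
        (by norm_num [dotProduct, Fin.sum_univ_three, Matrix.cons_val_two]) ![1,0,0,0] ![0,1,0,0]
      have h2 := H ![1,0,0] ![0,1,0] (by norm_num [dotProduct, Fin.sum_univ_three, Matrix.cons_val_two])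
        (by norm_num [dotProduct, Fin.sum_univ_three, Matrix.cons_val_two]) ![1,0,0]
        (by norm_num [dotProduct, Fin.sum_univ_three, Matrix.cons_val_two]) ![1,0,0,0] ![0,0,1,0]
      have h3 := H ![1,0,0] ![0,1,0] (by norm_num [dotProduct, Fin.sum_univ_three, Matrix.cons_val_two])
        (by norm_num [dotProduct, Fin.sum_univ_three, Matrix.cons_val_two]) ![1,0,0]
        (by norm_num [dotProduct, Fin.sum_univ_three, Matrix.cons_val_two]) ![1,0,0,0] ![0,0,0,1]
      have h4 := H ![1,0,0] ![0,1,0] (by norm_num [dotProduct, Fin.sum_univ_three, Matrix.cons_val_two])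
        (by norm_num [dotProduct, Fin.sum_univ_three, Matrix.cons_val_two]) ![1,0,0]
        (by norm_num [dotProduct, Fin.sum_univ_three, Matrix.cons_val_two]) ![0,1,0,0] ![0,0,1,0]
      have h5 := H ![0,1,0] ![0,0,1] (by norm_num [dotProduct, Fin.sum_univ_three, Matrix.cons_val_two])
        (by norm_num [dotProduct, Fin.sum_univ_three, Matrix.cons_val_two]) ![1,0,0]
        (by norm_num [dotProduct, Fin.sum_univ_three, Matrix.cons_val_two]) ![1,0,0,0] ![0,1,0,0]
      have h6 := H ![0,1,0] ![0,0,1] (by norm_num [dotProduct, Fin.sum_univ_three, Matrix.cons_val_two])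
        (by norm_num [dotProduct, Fin.sum_univ_three, Matrix.cons_val_two]) ![1,0,0]
        (by norm_num [dotProduct, Fin.sum_univ_three, Matrix.cons_val_two]) ![1,0,0,0] ![0,0,1,0]
      rw [hP01] at h1 h2 h3 h4
      rw [hP12] at h5 h6
      simp only [omega, ip, Km, J1p, J2p, J3p, J1m, J2m, J3m, Matrix.mulVec, dotProduct,
      Fin.sum_univ_three, Fin.sum_univ_four, Matrix.cons_val', Matrix.cons_val_zero,
      Matrix.cons_val_one, Matrix.head_cons, Matrix.empty_val', Matrix.cons_val_fin_one,
      Matrix.head_fin_const, Matrix.smul_apply, Matrix.add_apply, Matrix.of_apply,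
      Matrix.cons_val_two, Matrix.cons_val_three, Matrix.tail_cons, Prod.fst_sub, Prod.snd_sub,
      Pi.sub_apply, smul_eq_mul] at h1 h2 h3 h4 h5 h6
      norm_num at h1 h2 h3 h4 h5 h6
      rw [Prod.ext_iff]
      constructor <;> funext j <;> fin_cases j
      · show (R (0, ![1,0,0])).1 0 = 0
        exact mul_left_cancel₀ hne (show t₂ * (R (0, ![1,0,0])).1 0 = t₂ * 0 by
          linear_combination h5 - h1)
      · show (R (0, ![1,0,0])).1 1 = 0
        exact h2.resolve_left hne
      · show (R (0, ![1,0,0])).1 2 = 0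
        linarith [h3.resolve_left hne, h4.resolve_left hne]
      · show (R (0, ![1,0,0])).2 0 = t₂⁻¹ * 1
        rw [mul_one]
        field_simp
        linear_combination h1
      · show (R (0, ![1,0,0])).2 1 = t₂⁻¹ * 0
        rw [mul_zero]
        exact h6.resolve_left hne
      · show (R (0, ![1,0,0])).2 2 = t₂⁻¹ * 0
        rw [mul_zero]
        linarith [h3.resolve_left hne, h4.resolve_left hne]
    have he1 : R (0, ![(0:ℝ),1,0]) = (0, t₂⁻¹ • ![(0:ℝ),1,0]) := by
      have g1 := H ![1,0,0] ![0,0,1] (by norm_num [dotProduct, Fin.sum_univ_three, Matrix.cons_val_two])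
        (by norm_num [dotProduct, Fin.sum_univ_three, Matrix.cons_val_two]) ![0,1,0]
        (by norm_num [dotProduct, Fin.sum_univ_three, Matrix.cons_val_two]) ![1,0,0,0] ![0,1,0,0]
      have g2 := H ![1,0,0] ![0,0,1] (by norm_num [dotProduct, Fin.sum_univ_three, Matrix.cons_val_two])
        (by norm_num [dotProduct, Fin.sum_univ_three, Matrix.cons_val_two]) ![0,1,0]
        (by norm_num [dotProduct, Fin.sum_univ_three, Matrix.cons_val_two]) ![1,0,0,0] ![0,0,1,0]
      have g3 := H ![1,0,0] ![0,0,1] (by norm_num [dotProduct, Fin.sum_univ_three, Matrix.cons_val_two])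
        (by norm_num [dotProduct, Fin.sum_univ_three, Matrix.cons_val_two]) ![0,1,0]
        (by norm_num [dotProduct, Fin.sum_univ_three, Matrix.cons_val_two]) ![1,0,0,0] ![0,0,0,1]
      have g4 := H ![1,0,0] ![0,0,1] (by norm_num [dotProduct, Fin.sum_univ_three, Matrix.cons_val_two])
        (by norm_num [dotProduct, Fin.sum_univ_three, Matrix.cons_val_two]) ![0,1,0]
        (by norm_num [dotProduct, Fin.sum_univ_three, Matrix.cons_val_two]) ![0,1,0,0] ![0,0,0,1]
      have g5 := H ![0,1,0] ![1,0,0] (by norm_num [dotProduct, Fin.sum_univ_three, Matrix.cons_val_two])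
        (by norm_num [dotProduct, Fin.sum_univ_three, Matrix.cons_val_two]) ![0,1,0]
        (by norm_num [dotProduct, Fin.sum_univ_three, Matrix.cons_val_two]) ![1,0,0,0] ![0,1,0,0]
      have g6 := H ![0,1,0] ![1,0,0] (by norm_num [dotProduct, Fin.sum_univ_three, Matrix.cons_val_two])
        (by norm_num [dotProduct, Fin.sum_univ_three, Matrix.cons_val_two]) ![0,1,0]
        (by norm_num [dotProduct, Fin.sum_univ_three, Matrix.cons_val_two]) ![1,0,0,0] ![0,0,0,1]
      rw [hP02] at g1 g2 g3 g4
      rw [hP10] at g5 g6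
      simp only [omega, ip, Km, J1p, J2p, J3p, J1m, J2m, J3m, Matrix.mulVec, dotProduct,
      Fin.sum_univ_three, Fin.sum_univ_four, Matrix.cons_val', Matrix.cons_val_zero,
      Matrix.cons_val_one, Matrix.head_cons, Matrix.empty_val', Matrix.cons_val_fin_one,
      Matrix.head_fin_const, Matrix.smul_apply, Matrix.add_apply, Matrix.of_apply,
      Matrix.cons_val_two, Matrix.cons_val_three, Matrix.tail_cons, Prod.fst_sub, Prod.snd_sub,
      Pi.sub_apply, smul_eq_mul] at g1 g2 g3 g4 g5 g6
      norm_num at g1 g2 g3 g4 g5 g6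
      rw [Prod.ext_iff]
      constructor <;> funext j <;> fin_cases j
      · show (R (0, ![0,1,0])).1 0 = 0
        exact g5.resolve_left hne
      · show (R (0, ![0,1,0])).1 1 = 0
        exact mul_left_cancel₀ hne (show t₂ * (R (0, ![0,1,0])).1 1 = t₂ * 0 by
          linear_combination (g2 - g4) / 2)
      · show (R (0, ![0,1,0])).1 2 = 0
        exact g3.resolve_left hne
      · show (R (0, ![0,1,0])).2 0 = t₂⁻¹ * 0
        rw [mul_zero]
        exact g1.resolve_left hne
      · show (R (0, ![0,1,0])).2 1 = t₂⁻¹ * 1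
        rw [mul_one]
        field_simp
        linear_combination (g2 + g4) / 2
      · show (R (0, ![0,1,0])).2 2 = t₂⁻¹ * 0
        rw [mul_zero]
        linarith [g3.resolve_left hne, g6.resolve_left hne]
    have he2 : R (0, ![(0:ℝ),0,1]) = (0, t₂⁻¹ • ![(0:ℝ),0,1]) := by
      have k1 := H ![1,0,0] ![0,1,0] (by norm_num [dotProduct, Fin.sum_univ_three, Matrix.cons_val_two])
        (by norm_num [dotProduct, Fin.sum_univ_three, Matrix.cons_val_two]) ![0,0,1]
        (by norm_num [dotProduct, Fin.sum_univ_three, Matrix.cons_val_two]) ![1,0,0,0] ![0,1,0,0]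
      have k2 := H ![1,0,0] ![0,1,0] (by norm_num [dotProduct, Fin.sum_univ_three, Matrix.cons_val_two])
        (by norm_num [dotProduct, Fin.sum_univ_three, Matrix.cons_val_two]) ![0,0,1]
        (by norm_num [dotProduct, Fin.sum_univ_three, Matrix.cons_val_two]) ![1,0,0,0] ![0,0,1,0]
      have k3 := H ![1,0,0] ![0,1,0] (by norm_num [dotProduct, Fin.sum_univ_three, Matrix.cons_val_two])
        (by norm_num [dotProduct, Fin.sum_univ_three, Matrix.cons_val_two]) ![0,0,1]
        (by norm_num [dotProduct, Fin.sum_univ_three, Matrix.cons_val_two]) ![1,0,0,0] ![0,0,0,1]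
      have k4 := H ![1,0,0] ![0,1,0] (by norm_num [dotProduct, Fin.sum_univ_three, Matrix.cons_val_two])
        (by norm_num [dotProduct, Fin.sum_univ_three, Matrix.cons_val_two]) ![0,0,1]
        (by norm_num [dotProduct, Fin.sum_univ_three, Matrix.cons_val_two]) ![0,0,1,0] ![0,1,0,0]
      have k5 := H ![0,1,0] ![1,0,0] (by norm_num [dotProduct, Fin.sum_univ_three, Matrix.cons_val_two])
        (by norm_num [dotProduct, Fin.sum_univ_three, Matrix.cons_val_two]) ![0,0,1]
        (by norm_num [dotProduct, Fin.sum_univ_three, Matrix.cons_val_two]) ![1,0,0,0] ![0,1,0,0]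
      have k6 := H ![0,1,0] ![1,0,0] (by norm_num [dotProduct, Fin.sum_univ_three, Matrix.cons_val_two])
        (by norm_num [dotProduct, Fin.sum_univ_three, Matrix.cons_val_two]) ![0,0,1]
        (by norm_num [dotProduct, Fin.sum_univ_three, Matrix.cons_val_two]) ![1,0,0,0] ![0,0,1,0]
      rw [hP01] at k1 k2 k3 k4
      rw [hP10] at k5 k6
      simp only [omega, ip, Km, J1p, J2p, J3p, J1m, J2m, J3m, Matrix.mulVec, dotProduct,
      Fin.sum_univ_three, Fin.sum_univ_four, Matrix.cons_val', Matrix.cons_val_zero,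
      Matrix.cons_val_one, Matrix.head_cons, Matrix.empty_val', Matrix.cons_val_fin_one,
      Matrix.head_fin_const, Matrix.smul_apply, Matrix.add_apply, Matrix.of_apply,
      Matrix.cons_val_two, Matrix.cons_val_three, Matrix.tail_cons, Prod.fst_sub, Prod.snd_sub,
      Pi.sub_apply, smul_eq_mul] at k1 k2 k3 k4 k5 k6
      norm_num at k1 k2 k3 k4 k5 k6
      rw [Prod.ext_iff]
      constructor <;> funext j <;> fin_cases j
      · show (R (0, ![0,0,1])).1 0 = 0
        exact k5.resolve_left hne
      · show (R (0, ![0,0,1])).1 1 = 0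
        exact k2.resolve_left hne
      · show (R (0, ![0,0,1])).1 2 = 0
        exact mul_left_cancel₀ hne (show t₂ * (R (0, ![0,0,1])).1 2 = t₂ * 0 by
          linear_combination (k3 - k4) / 2)
      · show (R (0, ![0,0,1])).2 0 = t₂⁻¹ * 0
        rw [mul_zero]
        exact k1.resolve_left hne
      · show (R (0, ![0,0,1])).2 1 = t₂⁻¹ * 0
        rw [mul_zero]
        exact k6.resolve_left hne
      · show (R (0, ![0,0,1])).2 2 = t₂⁻¹ * 1
        rw [mul_one]
        field_simp
        linear_combination (k3 + k4) / 2
    intro w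
    have hw : ((0, w) : (Fin 3 → ℝ) × (Fin 3 → ℝ)) =
        w 0 • ((0, ![(1:ℝ),0,0]) : (Fin 3 → ℝ) × (Fin 3 → ℝ)) + w 1 • (0, ![(0:ℝ),1,0])
          + w 2 • (0, ![(0:ℝ),0,1]) := by
      rw [Prod.ext_iff]
      constructor
      · funext j
        simp
      · funext j
        fin_cases j <;> simp
    rw [hw, map_add, map_add, LinearMap.map_smul, LinearMap.map_smul, LinearMap.map_smul, he0, he1, he2]
    rw [Prod.ext_iff]
    constructor
    · simp
    · show w 0 • (t₂⁻¹ • ![(1:ℝ),0,0]) + w 1 • (t₂⁻¹ • ![(0:ℝ),1,0]) + w 2 • (t₂⁻¹ • ![(0:ℝ),0,1])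
        = t₂⁻¹ • w
      funext j
      fin_cases j <;>
        simp [Matrix.cons_val_zero, Matrix.cons_val_one, Matrix.head_cons, smul_eq_mul] <;> ring
  · intro hR2 a b ha hb w hwb X Z
    rw [hR2 w]
    simp only [dotProduct, Fin.sum_univ_three] at ha hb hwb
    have key : w ⬝ᵥ (omega X Z - omega ((Kp a * Km b) *ᵥ X) ((Kp a * Km b) *ᵥ Z)).2
        = (Km w *ᵥ X) ⬝ᵥ Z := by
      simp only [omega, Kp, omega, ip, Km, J1p, J2p, J3p, J1m, J2m, J3m, Matrix.mulVec, dotProduct,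
      Fin.sum_univ_three, Fin.sum_univ_four, Matrix.cons_val', Matrix.cons_val_zero,
      Matrix.cons_val_one, Matrix.head_cons, Matrix.empty_val', Matrix.cons_val_fin_one,
      Matrix.head_fin_const, Matrix.smul_apply, Matrix.add_apply, Matrix.of_apply,
      Matrix.cons_val_two, Matrix.cons_val_three, Matrix.tail_cons, Prod.fst_sub, Prod.snd_sub,
      Pi.sub_apply, smul_eq_mul, Matrix.mul_apply]
      linear_combination
        (((b 0^2 + b 1^2 + b 2^2) *
          (w 0*(-(X 1*Z 0)+X 0*Z 1+X 3*Z 2-X 2*Z 3) + w 1*(-(X 2*Z 0)-X 3*Z 1+X 0*Z 2+X 1*Z 3)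
            + w 2*(-(X 3*Z 0)+X 2*Z 1-X 1*Z 2+X 0*Z 3)))/2) * ha
        + ((w 0*(-(X 1*Z 0)+X 0*Z 1+X 3*Z 2-X 2*Z 3) + w 1*(-(X 2*Z 0)-X 3*Z 1+X 0*Z 2+X 1*Z 3)
            + w 2*(-(X 3*Z 0)+X 2*Z 1-X 1*Z 2+X 0*Z 3))/2) * hb
        - ((a 0^2 + a 1^2 + a 2^2) *
          (b 0*(-(X 1*Z 0)+X 0*Z 1+X 3*Z 2-X 2*Z 3) + b 1*(-(X 2*Z 0)-X 3*Z 1+X 0*Z 2+X 1*Z 3)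
            + b 2*(-(X 3*Z 0)+X 2*Z 1-X 1*Z 2+X 0*Z 3))) * hwb
    calc t₂ * ip (0, t₂⁻¹ • w) (omega X Z - omega ((Kp a * Km b) *ᵥ X) ((Kp a * Km b) *ᵥ Z))
        = t₂ * (t₂⁻¹ * (w ⬝ᵥ (omega X Z - omega ((Kp a * Km b) *ᵥ X) ((Kp a * Km b) *ᵥ Z)).2)) := by
          have hip : ∀ D : (Fin 3 → ℝ) × (Fin 3 → ℝ), ip (0, t₂⁻¹ • w) D = t₂⁻¹ * (w ⬝ᵥ D.2) := by
            intro D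
            simp [ip, dotProduct, Fin.sum_univ_three, smul_eq_mul]
            ring
          rw [hip]
      _ = w ⬝ᵥ (omega X Z - omega ((Kp a * Km b) *ᵥ X) ((Kp a * Km b) *ᵥ Z)).2 := by
          rw [← mul_assoc, mul_inv_cancel₀ hne, one_mul]
      _ = (Km w *ᵥ X) ⬝ᵥ Z := key
end

section
/- Let ℛ be a self-adjoint linear endomorphism of ℝ³×ℝ³ (with the standard inner product). Then the following are equivalent: (i) for all unit vectors a, b ∈ ℝ³, every w ∈ ℝ³ with w·a = 0, every v ∈ ℝ³ with v·b = 0, and all X, Y ∈ ℝ⁴, one has ⟨ℛ(w,0), ω(X,Y) + ω(PX,PY)⟩ = 0 and ⟨ℛ(0,v), ω(X,Y) + ω(PX,PY)⟩ = 0, where P := K⁺(a)K⁻(b); (ii) there exist λ, μ ∈ ℝ such that ℛ(w,v) = (λw, μv) for all (w,v) ∈ ℝ³×ℝ³ (i.e., both diagonal blocks of ℛ are scalar and the mixed block vanishes). -/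
open Matrix

section Helpers

set_option maxHeartbeats 2000000

lemma dp3 (x y : Fin 3 → ℝ) : x ⬝ᵥ y = x 0 * y 0 + x 1 * y 1 + x 2 * y 2 := by
  simp [dotProduct, Fin.sum_univ_three]

lemma key1 (a b : Fin 3 → ℝ) (X Y : Fin 4 → ℝ) (i : Fin 3) :
    (omega ((Kp a * Km b) *ᵥ X) ((Kp a * Km b) *ᵥ Y)).1 i
    = (b ⬝ᵥ b) * (2 * (a ⬝ᵥ (omega X Y).1) * a i - (a ⬝ᵥ a) * (omega X Y).1 i) := by
  fin_cases i <;>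
  · simp [Kp, Km, J1p, J2p, J3p, J1m, J2m, J3m, omega, Matrix.mul_apply, Matrix.mulVec,
      dotProduct, Fin.sum_univ_succ]
    ring

lemma key2 (a b : Fin 3 → ℝ) (X Y : Fin 4 → ℝ) (i : Fin 3) :
    (omega ((Kp a * Km b) *ᵥ X) ((Kp a * Km b) *ᵥ Y)).2 i
    = (a ⬝ᵥ a) * (2 * (b ⬝ᵥ (omega X Y).2) * b i - (b ⬝ᵥ b) * (omega X Y).2 i) := by
  fin_cases i <;>
  · simp [Kp, Km, J1p, J2p, J3p, J1m, J2m, J3m, omega, Matrix.mul_apply, Matrix.mulVec,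
      dotProduct, Fin.sum_univ_succ]
    ring

lemma keySum (a b : Fin 3 → ℝ) (ha : a ⬝ᵥ a = 1) (hb : b ⬝ᵥ b = 1) (X Y : Fin 4 → ℝ) :
    omega X Y + omega ((Kp a * Km b) *ᵥ X) ((Kp a * Km b) *ᵥ Y)
    = ((2 * (a ⬝ᵥ (omega X Y).1)) • a, (2 * (b ⬝ᵥ (omega X Y).2)) • b) := by
  refine Prod.ext ?_ ?_
  · funext i
    have h1 := key1 a b X Y i
    rw [Prod.fst_add, Pi.add_apply, h1, ha, hb]
    simp only [Pi.smul_apply, smul_eq_mul]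
    ring
  · funext i
    have h2 := key2 a b X Y i
    rw [Prod.snd_add, Pi.add_apply, h2, ha, hb]
    simp only [Pi.smul_apply, smul_eq_mul]
    ring

end Helpers

lemma extract (a F G : Fin 3 → ℝ) (ha : a ⬝ᵥ a = 1)
    (hm : ∀ b : Fin 3 → ℝ, b ⬝ᵥ b = 1 → ∀ u : Fin 3 → ℝ,
      (a ⬝ᵥ u) * (F ⬝ᵥ a) + (b ⬝ᵥ u) * (G ⬝ᵥ b) = 0) :
    F ⬝ᵥ a = 0 ∧ G = 0 := by
  have hex : a 0 ≠ 0 ∨ a 1 ≠ 0 ∨ a 2 ≠ 0 := by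
    by_contra hc
    push_neg at hc
    rw [dp3, hc.1, hc.2.1, hc.2.2] at ha
    norm_num at ha
  have hFa : F ⬝ᵥ a = 0 := by
    rcases hex with h|h|h
    · have H := hm ![0,1,0] (by norm_num [dp3]) ![1,0,0]
      have c1 : a ⬝ᵥ ![1,0,0] = a 0 := by rw [dp3]; simp
      have c2 : (![0,1,0] : Fin 3 → ℝ) ⬝ᵥ ![1,0,0] = 0 := by norm_num [dp3]
      rw [c1, c2, zero_mul, add_zero] at H
      exact (mul_eq_zero.mp H).resolve_left h
    · have H := hm ![1,0,0] (by norm_num [dp3]) ![0,1,0]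
      have c1 : a ⬝ᵥ ![0,1,0] = a 1 := by rw [dp3]; simp
      have c2 : (![1,0,0] : Fin 3 → ℝ) ⬝ᵥ ![0,1,0] = 0 := by norm_num [dp3]
      rw [c1, c2, zero_mul, add_zero] at H
      exact (mul_eq_zero.mp H).resolve_left h
    · have H := hm ![1,0,0] (by norm_num [dp3]) ![0,0,1]
      have c1 : a ⬝ᵥ ![0,0,1] = a 2 := by rw [dp3]; simp
      have c2 : (![1,0,0] : Fin 3 → ℝ) ⬝ᵥ ![0,0,1] = 0 := by norm_num [dp3]
      rw [c1, c2, zero_mul, add_zero] at H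
      exact (mul_eq_zero.mp H).resolve_left h
  refine ⟨hFa, ?_⟩
  funext j
  fin_cases j
  · have H := hm ![1,0,0] (by norm_num [dp3]) ![1,0,0]
    rw [hFa, mul_zero, zero_add] at H
    simpa [dp3, Matrix.vecHead, Matrix.vecTail] using H
  · have H := hm ![0,1,0] (by norm_num [dp3]) ![0,1,0]
    rw [hFa, mul_zero, zero_add] at H
    simpa [dp3, Matrix.vecHead, Matrix.vecTail] using H
  · have H := hm ![0,0,1] (by norm_num [dp3]) ![0,0,1]
    rw [hFa, mul_zero, zero_add] at H
    simpa [dp3, Matrix.vecHead, Matrix.vecTail] using H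

lemma scalarize (L : (Fin 3 → ℝ) → (Fin 3 → ℝ))
    (hadd : ∀ x y, L (x + y) = L x + L y)
    (hsmul : ∀ (c : ℝ) x, L (c • x) = c • L x)
    (hL : ∀ a : Fin 3 → ℝ, a ⬝ᵥ a = 1 → ∀ w, w ⬝ᵥ a = 0 → (L w) ⬝ᵥ a = 0) :
    ∃ lam : ℝ, ∀ w, L w = lam • w := by
  have hL' : ∀ a : Fin 3 → ℝ, a ≠ 0 → ∀ w, w ⬝ᵥ a = 0 → (L w) ⬝ᵥ a = 0 := by
    intro a ha0 w hw
    have hex : a 0 ≠ 0 ∨ a 1 ≠ 0 ∨ a 2 ≠ 0 := by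
      by_contra hc
      push_neg at hc
      apply ha0
      funext j
      fin_cases j
      exacts [hc.1, hc.2.1, hc.2.2]
    have hpos : 0 < a ⬝ᵥ a := by
      rw [dp3]
      rcases hex with h|h|h <;>
        nlinarith [mul_self_nonneg (a 0), mul_self_nonneg (a 1), mul_self_nonneg (a 2),
          mul_self_pos.mpr h]
    have hcpos : 0 < Real.sqrt (a ⬝ᵥ a) := Real.sqrt_pos.mpr hpos
    have hcc : Real.sqrt (a ⬝ᵥ a) * Real.sqrt (a ⬝ᵥ a) = a ⬝ᵥ a := Real.mul_self_sqrt hpos.le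
    have ha' : ((Real.sqrt (a ⬝ᵥ a))⁻¹ • a) ⬝ᵥ ((Real.sqrt (a ⬝ᵥ a))⁻¹ • a) = 1 := by
      rw [smul_dotProduct, dotProduct_smul, smul_eq_mul, smul_eq_mul,
        show (Real.sqrt (a ⬝ᵥ a))⁻¹ * ((Real.sqrt (a ⬝ᵥ a))⁻¹ * (a ⬝ᵥ a))
          = (a ⬝ᵥ a) / (Real.sqrt (a ⬝ᵥ a) * Real.sqrt (a ⬝ᵥ a)) from by ring, hcc,
        div_self hpos.ne']
    have hw' : w ⬝ᵥ ((Real.sqrt (a ⬝ᵥ a))⁻¹ • a) = 0 := by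
      rw [dotProduct_smul, smul_eq_mul, hw, mul_zero]
    have H := hL _ ha' w hw'
    rw [dotProduct_smul, smul_eq_mul] at H
    rcases mul_eq_zero.mp H with h|h
    · exact absurd h (inv_ne_zero hcpos.ne')
    · exact h
  have hsub : ∀ x y, L (x - y) = L x - L y := by
    intro x y
    rw [sub_eq_add_neg, hadd, ← neg_one_smul ℝ y, hsmul, neg_one_smul, ← sub_eq_add_neg]
  have ne0 : ∀ (i : Fin 3) (x : Fin 3 → ℝ), x i = 1 → x ≠ 0 := by
    intro i x hx h0
    rw [h0] at hx
    simp at hx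
  have d01 : (L ![1,0,0]) 1 = 0 := by
    have := hL' ![0,1,0] (ne0 1 _ (by norm_num)) ![1,0,0] (by norm_num [dp3])
    simpa [dp3, Matrix.vecHead, Matrix.vecTail] using this
  have d02 : (L ![1,0,0]) 2 = 0 := by
    have := hL' ![0,0,1] (ne0 2 _ (by simp)) ![1,0,0] (by norm_num [dp3])
    simpa [dp3, Matrix.vecHead, Matrix.vecTail] using this
  have d10 : (L ![0,1,0]) 0 = 0 := by
    have := hL' ![1,0,0] (ne0 0 _ (by norm_num)) ![0,1,0] (by norm_num [dp3])
    simpa [dp3, Matrix.vecHead, Matrix.vecTail] using this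
  have d12 : (L ![0,1,0]) 2 = 0 := by
    have := hL' ![0,0,1] (ne0 2 _ (by simp)) ![0,1,0] (by norm_num [dp3])
    simpa [dp3, Matrix.vecHead, Matrix.vecTail] using this
  have d20 : (L ![0,0,1]) 0 = 0 := by
    have := hL' ![1,0,0] (ne0 0 _ (by norm_num)) ![0,0,1] (by norm_num [dp3])
    simpa [dp3, Matrix.vecHead, Matrix.vecTail] using this
  have d21 : (L ![0,0,1]) 1 = 0 := by
    have := hL' ![0,1,0] (ne0 1 _ (by norm_num)) ![0,0,1] (by norm_num [dp3])
    simpa [dp3, Matrix.vecHead, Matrix.vecTail] using this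
  have q01 : (L ![1,0,0]) 0 = (L ![0,1,0]) 1 := by
    have H := hL' ![1,1,0] (ne0 0 _ (by norm_num)) (![1,0,0] - ![0,1,0]) (by norm_num [dp3])
    rw [hsub] at H
    rw [dp3] at H
    simp only [Pi.sub_apply] at H
    norm_num [d01, d10, Matrix.cons_val_two] at H
    linarith
  have q02 : (L ![1,0,0]) 0 = (L ![0,0,1]) 2 := by
    have H := hL' ![1,0,1] (ne0 0 _ (by norm_num)) (![1,0,0] - ![0,0,1]) (by norm_num [dp3])
    rw [hsub] at H
    rw [dp3] at H
    simp only [Pi.sub_apply] at H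
    norm_num [d02, d20, Matrix.cons_val_two] at H
    linarith
  refine ⟨(L ![1,0,0]) 0, ?_⟩
  intro w
  have hwdec : w = w 0 • ![1,0,0] + w 1 • ![0,1,0] + w 2 • ![0,0,1] := by
    funext j
    fin_cases j <;> simp
  rw [hwdec, hadd, hadd, hsmul, hsmul, hsmul]
  funext j
  fin_cases j <;> simp [d01, d02, d10, d12, d20, d21, ← q01, ← q02] <;> ring

/-- For a self-adjoint ℛ on ℝ³×ℝ³, the pointwise form of identity (eq D3-2) of the
paper (property F, i.e. integrability, of 𝒟₃) holds exactly when both diagonal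
blocks of ℛ are scalar and the mixed block vanishes. -/
theorem stmt12 (R : ((Fin 3 → ℝ) × (Fin 3 → ℝ)) →ₗ[ℝ] ((Fin 3 → ℝ) × (Fin 3 → ℝ)))
    (hR : ∀ x y, ip (R x) y = ip x (R y)) :
    (∀ a b : Fin 3 → ℝ, a ⬝ᵥ a = 1 → b ⬝ᵥ b = 1 →
      ∀ w : Fin 3 → ℝ, w ⬝ᵥ a = 0 → ∀ v : Fin 3 → ℝ, v ⬝ᵥ b = 0 →
        ∀ X Y : Fin 4 → ℝ,
          ip (R (w, 0))
              (omega X Y + omega ((Kp a * Km b) *ᵥ X) ((Kp a * Km b) *ᵥ Y)) = 0 ∧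
          ip (R (0, v))
              (omega X Y + omega ((Kp a * Km b) *ᵥ X) ((Kp a * Km b) *ᵥ Y)) = 0) ↔
    (∃ lam mu : ℝ, ∀ w v : Fin 3 → ℝ, R (w, v) = (lam • w, mu • v)) := by
  constructor
  · intro h
    have o1 : ∀ (a u : Fin 3 → ℝ),
        a ⬝ᵥ (omega ![1,0,0,0] ![0, u 0, u 1, u 2]).1 = (a ⬝ᵥ u) / 2 := by
      intro a u
      rw [dp3, dp3]
      simp [omega, J1p, J2p, J3p, Matrix.mulVec, dotProduct, Fin.sum_univ_succ]
      ring
    have o2 : ∀ (b u : Fin 3 → ℝ),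
        b ⬝ᵥ (omega ![1,0,0,0] ![0, u 0, u 1, u 2]).2 = (b ⬝ᵥ u) / 2 := by
      intro b u
      rw [dp3, dp3]
      simp [omega, J1m, J2m, J3m, Matrix.mulVec, dotProduct, Fin.sum_univ_succ]
      ring
    have main1 : ∀ a b : Fin 3 → ℝ, a ⬝ᵥ a = 1 → b ⬝ᵥ b = 1 → ∀ w, w ⬝ᵥ a = 0 →
        ∀ u : Fin 3 → ℝ,
          (a ⬝ᵥ u) * ((R (w, 0)).1 ⬝ᵥ a) + (b ⬝ᵥ u) * ((R (w, 0)).2 ⬝ᵥ b) = 0 := by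
      intro a b ha hb w hw u
      have H := (h a b ha hb w hw 0 (by rw [dp3]; simp) ![1,0,0,0] ![0, u 0, u 1, u 2]).1
      rw [keySum a b ha hb, o1 a u, o2 b u] at H
      simp only [ip] at H
      rw [dotProduct_smul, dotProduct_smul, smul_eq_mul, smul_eq_mul] at H
      linarith
    have main2 : ∀ a b : Fin 3 → ℝ, a ⬝ᵥ a = 1 → b ⬝ᵥ b = 1 → ∀ v, v ⬝ᵥ b = 0 →
        ∀ u : Fin 3 → ℝ,
          (a ⬝ᵥ u) * ((R (0, v)).1 ⬝ᵥ a) + (b ⬝ᵥ u) * ((R (0, v)).2 ⬝ᵥ b) = 0 := by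
      intro a b ha hb v hv u
      have H := (h a b ha hb 0 (by rw [dp3]; simp) v hv ![1,0,0,0] ![0, u 0, u 1, u 2]).2
      rw [keySum a b ha hb, o1 a u, o2 b u] at H
      simp only [ip] at H
      rw [dotProduct_smul, dotProduct_smul, smul_eq_mul, smul_eq_mul] at H
      linarith
    have sideA : ∀ a : Fin 3 → ℝ, a ⬝ᵥ a = 1 → ∀ w, w ⬝ᵥ a = 0 →
        (R (w, 0)).1 ⬝ᵥ a = 0 ∧ (R (w, 0)).2 = 0 :=
      fun a ha w hw => extract a _ _ ha (fun b hb u => main1 a b ha hb w hw u)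
    have sideB : ∀ b : Fin 3 → ℝ, b ⬝ᵥ b = 1 → ∀ v, v ⬝ᵥ b = 0 →
        (R (0, v)).2 ⬝ᵥ b = 0 ∧ (R (0, v)).1 = 0 :=
      fun b hb v hv => extract b _ _ hb (fun a ha u => by
        have := main2 a b ha hb v hv u
        linarith)
    have addL : ∀ x y : Fin 3 → ℝ, R (x + y, 0) = R (x, 0) + R (y, 0) := by
      intro x y
      rw [show ((x + y, (0 : Fin 3 → ℝ)) : _ × _) = (x, 0) + (y, 0) by
        rw [Prod.mk_add_mk, add_zero], map_add]
    have smulL : ∀ (c : ℝ) (x : Fin 3 → ℝ), R (c • x, 0) = c • R (x, 0) := by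
      intro c x
      rw [show ((c • x, (0 : Fin 3 → ℝ)) : _ × _) = c • (x, 0) by
        rw [Prod.smul_mk, smul_zero], _root_.map_smul]
    have addR : ∀ x y : Fin 3 → ℝ, R (0, x + y) = R (0, x) + R (0, y) := by
      intro x y
      rw [show (((0 : Fin 3 → ℝ), x + y) : _ × _) = (0, x) + (0, y) by
        rw [Prod.mk_add_mk, add_zero], map_add]
    have smulR : ∀ (c : ℝ) (x : Fin 3 → ℝ), R (0, c • x) = c • R (0, x) := by
      intro c x
      rw [show (((0 : Fin 3 → ℝ), c • x) : _ × _) = c • (0, x) by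
        rw [Prod.smul_mk, smul_zero], _root_.map_smul]
    obtain ⟨lam, hlam⟩ := scalarize (fun w => (R (w, 0)).1)
      (fun x y => by show (R (x + y, 0)).1 = (R (x, 0)).1 + (R (y, 0)).1; rw [addL]; rfl)
      (fun c x => by show (R (c • x, 0)).1 = c • (R (x, 0)).1; rw [smulL]; rfl)
      (fun a ha w hw => (sideA a ha w hw).1)
    obtain ⟨mu, hmu⟩ := scalarize (fun v => (R (0, v)).2)
      (fun x y => by show (R (0, x + y)).2 = (R (0, x)).2 + (R (0, y)).2; rw [addR]; rfl)
      (fun c x => by show (R (0, c • x)).2 = c • (R (0, x)).2; rw [smulR]; rfl)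
      (fun b hb v hv => (sideB b hb v hv).1)
    have off1 : ∀ w : Fin 3 → ℝ, (R (w, 0)).2 = 0 := by
      intro w
      have hdec : w = ![w 0, w 1, 0] + ![0, 0, w 2] := by
        funext j
        fin_cases j <;> simp
      have h1 := (sideA ![0,0,1] (by rw [dp3]; simp) ![w 0, w 1, 0] (by rw [dp3]; simp)).2
      have h2 := (sideA ![1,0,0] (by rw [dp3]; simp) ![0, 0, w 2] (by rw [dp3]; simp)).2
      rw [hdec, addL, Prod.snd_add, h1, h2, add_zero]
    have off2 : ∀ v : Fin 3 → ℝ, (R (0, v)).1 = 0 := by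
      intro v
      have hdec : v = ![v 0, v 1, 0] + ![0, 0, v 2] := by
        funext j
        fin_cases j <;> simp
      have h1 := (sideB ![0,0,1] (by rw [dp3]; simp) ![v 0, v 1, 0] (by rw [dp3]; simp)).2
      have h2 := (sideB ![1,0,0] (by rw [dp3]; simp) ![0, 0, v 2] (by rw [dp3]; simp)).2
      rw [hdec, addR, Prod.fst_add, h1, h2, add_zero]
    refine ⟨lam, mu, fun w v => ?_⟩
    rw [show ((w, v) : _ × _) = (w, 0) + (0, v) by
      rw [Prod.mk_add_mk, add_zero, zero_add], map_add]
    refine Prod.ext ?_ ?_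
    · rw [Prod.fst_add, hlam w, off2 v, add_zero]
    · rw [Prod.snd_add, hmu v, off1 w, zero_add]
  · rintro ⟨lam, mu, hs⟩ a b ha hb w hw v hv X Y
    rw [keySum a b ha hb]
    constructor
    · rw [hs w 0]
      simp only [ip, smul_zero]
      rw [zero_dotProduct, add_zero, smul_dotProduct, dotProduct_smul,
        hw, smul_zero, smul_zero]
    · rw [hs 0 v]
      simp only [ip, smul_zero]
      rw [zero_dotProduct, zero_add, smul_dotProduct, dotProduct_smul,
        hv, smul_zero, smul_zero]
end

section
/- Regard the quaternions ℍ as ℂ ⊕ ℂj, so every quaternion is z₁ + z₂j with z₁, z₂ ∈ ℂ. The map F: ℂ⁴ → ℍ², F(z₁,z₂,z₃,z₄) = (z₁+z₂j, z₃+z₄j), satisfies F(z) ≠ 0 for z ≠ 0 and F(λz) = λ·F(z) for every λ ∈ ℂ (λ acting by left quaternion multiplication). Consequently F descends to a well-defined surjective map π: ℙ(ℂ⁴) → ℙ(ℍ²) between the complex projective space of 1-dimensional ℂ-subspaces of ℂ⁴ and the quaternionic projective line of 1-dimensional ℍ-submodules of the left ℍ-module ℍ². Moreover, for every point w ∈ ℙ(ℍ²)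 there is a 2-dimensional ℂ-subspace W ⊆ ℂ⁴ such that the fibre π⁻¹(w) equals {[z] : z ∈ W, z ≠ 0} (so each fibre is a complex projective line). -/
open scoped Quaternion

/-- The quaternion z₁ + z₂j determined by a pair of complex numbers, writing
ℍ = ℂ ⊕ ℂj (basis 1, i, j, k; (x+iy)j = xj + yk). -/
def mkQ (z w : ℂ) : ℍ[ℝ] := ⟨z.re, z.im, w.re, w.im⟩

/-- The map F : ℂ⁴ → ℍ², F(z₁,z₂,z₃,z₄) = (z₁+z₂j, z₃+z₄j). -/
def Fq (z : Fin 4 → ℂ) : Fin 2 → ℍ[ℝ] := ![mkQ (z 0) (z 1), mkQ (z 2) (z 3)]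

lemma mkQ_mul (a b c d : ℂ) : mkQ a b * mkQ c d
    = mkQ (a*c - b*(starRingEnd ℂ d)) (a*d + b*(starRingEnd ℂ c)) := by
  ext <;> simp only [Quaternion.re_mul, Quaternion.imI_mul, Quaternion.imJ_mul, Quaternion.imK_mul] <;> simp [mkQ, Quaternion.ext_iff] <;> ring

lemma mkQ_eq_zero {a b : ℂ} : mkQ a b = 0 ↔ a = 0 ∧ b = 0 := by
  simp only [Quaternion.ext_iff, Quaternion.re_zero, Quaternion.imI_zero, Quaternion.imJ_zero, Quaternion.imK_zero]
  simp [mkQ, Quaternion.ext_iff, Complex.ext_iff]; tauto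

lemma mkQ_add (a b c d : ℂ) : mkQ (a + c) (b + d) = mkQ a b + mkQ c d := by
  ext <;> simp only [Quaternion.re_add, Quaternion.imI_add, Quaternion.imJ_add, Quaternion.imK_add] <;> simp [mkQ]

lemma mkQ_surj (q : ℍ[ℝ]) : mkQ ⟨q.re, q.imI⟩ ⟨q.imJ, q.imK⟩ = q := rfl

/-- Inverse of Fq. -/
def Gq (q : Fin 2 → ℍ[ℝ]) : Fin 4 → ℂ :=
  ![⟨(q 0).re, (q 0).imI⟩, ⟨(q 0).imJ, (q 0).imK⟩, ⟨(q 1).re, (q 1).imI⟩, ⟨(q 1).imJ, (q 1).imK⟩]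

lemma Fq_Gq (q : Fin 2 → ℍ[ℝ]) : Fq (Gq q) = q := by
  funext i; fin_cases i <;> rfl

lemma Gq_Fq (z : Fin 4 → ℂ) : Gq (Fq z) = z := by
  funext i; fin_cases i <;> rfl

lemma Fq_inj : Function.Injective Fq :=
  Function.LeftInverse.injective Gq_Fq

lemma Fq_ne_zero {z : Fin 4 → ℂ} (hz : z ≠ 0) : Fq z ≠ 0 := by
  intro h
  apply hz
  have := congrArg Gq h
  rw [Gq_Fq] at this
  rw [this]
  funext i; fin_cases i <;> simp [Gq, Complex.ext_iff]

lemma Fq_smul (l : ℂ) (z : Fin 4 → ℂ) : Fq (l • z) = fun i => mkQ l 0 * Fq z i := by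
  funext i
  fin_cases i <;>
    simp only [Fq, Pi.smul_apply, Complex.smul_re, Complex.smul_im, Matrix.cons_val_zero,
      Matrix.cons_val_one, Matrix.head_cons, Fin.zero_eta, Fin.mk_one, mkQ_mul] <;>
    simp

lemma Fq_add (z w : Fin 4 → ℂ) : Fq (z + w) = Fq z + Fq w := by
  funext i; fin_cases i <;> simp [Fq, mkQ_add]

/-- Key identity: multiplying Fq z componentwise by mkQ c d corresponds to the
ℂ-linear combination c • z₀ + d • z₁, where z₀ = Gq v, z₁ = Gq (j * v). -/
lemma key_s14 (v : Fin 2 → ℍ[ℝ]) (c d : ℂ) :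
    Fq (c • Gq v + d • Gq (fun i => mkQ 0 1 * v i)) = fun i => mkQ c d * v i := by
  rw [Fq_add, Fq_smul, Fq_smul, Fq_Gq, Fq_Gq]
  have : mkQ c 0 + mkQ d 0 * mkQ 0 1 = mkQ c d := by
    rw [mkQ_mul]; ext <;> simp only [Quaternion.re_add, Quaternion.imI_add, Quaternion.imJ_add, Quaternion.imK_add] <;> simp [mkQ]
  funext i
  simp only [Pi.add_apply]
  rw [← this, add_mul, mul_assoc]

lemma Fq_zero : Fq 0 = 0 := by
  funext i; fin_cases i <;> simp [Fq, mkQ, Quaternion.ext_iff] <;> rfl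

/-- F is nonvanishing away from 0 and ℂ-semilinear for left quaternion
multiplication, hence descends to a well-defined surjective map
π : ℙ(ℂ⁴) → ℙ(ℍ²) whose fibres are complex projective lines. -/
theorem stmt14 :
    (∀ z : Fin 4 → ℂ, z ≠ 0 → Fq z ≠ 0) ∧
    (∀ (l : ℂ) (z : Fin 4 → ℂ), Fq (l • z) = fun i => mkQ l 0 * Fq z i) ∧
    ∃ π : Projectivization ℂ (Fin 4 → ℂ) →
        Projectivization ℍ[ℝ] (Fin 2 → ℍ[ℝ]),
      Function.Surjective π ∧
      (∀ (z : Fin 4 → ℂ) (hz : z ≠ 0) (hF : Fq z ≠ 0),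
        π (Projectivization.mk ℂ z hz) = Projectivization.mk ℍ[ℝ] (Fq z) hF) ∧
      ∀ w : Projectivization ℍ[ℝ] (Fin 2 → ℍ[ℝ]),
        ∃ W : Submodule ℂ (Fin 4 → ℂ), Module.finrank ℂ W = 2 ∧
          ∀ p : Projectivization ℂ (Fin 4 → ℂ),
            π p = w ↔ ∃ (z : Fin 4 → ℂ) (hz : z ≠ 0),
              z ∈ W ∧ p = Projectivization.mk ℂ z hz := by
  refine ⟨fun z hz => Fq_ne_zero hz, Fq_smul, ?_⟩
  set π : Projectivization ℂ (Fin 4 → ℂ) → Projectivization ℍ[ℝ] (Fin 2 → ℍ[ℝ]) :=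
    fun p => Projectivization.mk ℍ[ℝ] (Fq p.rep) (Fq_ne_zero p.rep_nonzero) with hπdef
  have hπ : ∀ (z : Fin 4 → ℂ) (hz : z ≠ 0) (hF : Fq z ≠ 0),
      π (Projectivization.mk ℂ z hz) = Projectivization.mk ℍ[ℝ] (Fq z) hF := by
    intro z hz hF
    obtain ⟨a, ha⟩ := Projectivization.exists_smul_eq_mk_rep ℂ z hz
    show Projectivization.mk ℍ[ℝ] (Fq (Projectivization.mk ℂ z hz).rep) _
        = Projectivization.mk ℍ[ℝ] (Fq z) hF
    rw [Projectivization.mk_eq_mk_iff]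
    refine ⟨Units.mk0 (mkQ (a : ℂ) 0) (by simp [mkQ_eq_zero, a.ne_zero]), ?_⟩
    rw [← ha, show (a • z : Fin 4 → ℂ) = (a : ℂ) • z from rfl, Fq_smul]
    funext i
    simp [Units.smul_def]
  refine ⟨π, ?_, hπ, ?_⟩
  · -- surjectivity
    intro w
    have hg : Gq w.rep ≠ 0 := by
      intro h
      exact w.rep_nonzero (by rw [← Fq_Gq w.rep, h, Fq_zero])
    refine ⟨Projectivization.mk ℂ (Gq w.rep) hg, ?_⟩
    rw [hπ _ hg (Fq_ne_zero hg)]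
    conv_rhs => rw [← w.mk_rep]
    rw [Projectivization.mk_eq_mk_iff]
    exact ⟨1, by simp [Fq_Gq]⟩
  · -- fibres
    intro w
    set v := w.rep with hvdef
    have hv : v ≠ 0 := w.rep_nonzero
    set z₀ := Gq v with hz₀def
    set z₁ := Gq (fun i => mkQ 0 1 * v i) with hz₁def
    have hkey : ∀ c d : ℂ, Fq (c • z₀ + d • z₁) = fun i => mkQ c d * v i := key_s14 v
    -- linear independence
    have li : LinearIndependent ℂ ![z₀, z₁] := by
      rw [LinearIndependent.pair_iff]
      intro s t hst
      have h1 : (fun i => mkQ s t * v i) = 0 := by rw [← hkey, hst, Fq_zero]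
      obtain ⟨i, hi⟩ := Function.ne_iff.mp hv
      have h2 : mkQ s t * v i = 0 := congrFun h1 i
      rcases mul_eq_zero.mp h2 with h | h
      · exact mkQ_eq_zero.mp h
      · exact absurd h hi
    have hrange : Set.range ![z₀, z₁] = {z₀, z₁} := by
      ext x; simp [Fin.exists_fin_two]; tauto
    refine ⟨Submodule.span ℂ {z₀, z₁}, ?_, ?_⟩
    · rw [← hrange, finrank_span_eq_card li, Fintype.card_fin]
    · intro p
      constructor
      · intro hpw
        induction p using Projectivization.ind with
        | h z hz =>
          rw [hπ z hz (Fq_ne_zero hz), ← w.mk_rep, Projectivization.mk_eq_mk_iff] at hpw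
          obtain ⟨a, ha⟩ := hpw
          have ha' : Fq z = fun i => (a : ℍ[ℝ]) * v i := by
            rw [← ha]; funext i; simp [Units.smul_def, hvdef]
          have hz' : z = (⟨(a : ℍ[ℝ]).re, (a : ℍ[ℝ]).imI⟩ : ℂ) • z₀
              + (⟨(a : ℍ[ℝ]).imJ, (a : ℍ[ℝ]).imK⟩ : ℂ) • z₁ := by
            apply Fq_inj
            rw [hkey, ha']
            funext i
            rw [mkQ_surj]
          exact ⟨z, hz, hz' ▸ Submodule.mem_span_pair.mpr ⟨_, _, rfl⟩, rfl⟩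
      · rintro ⟨z, hz, hzW, rfl⟩
        obtain ⟨c, d, hcd⟩ := Submodule.mem_span_pair.mp hzW
        have hFz : Fq z = fun i => mkQ c d * v i := by rw [← hcd, hkey]
        have hcd0 : mkQ c d ≠ 0 := by
          intro h
          apply Fq_ne_zero hz
          rw [hFz]; funext i; rw [h, zero_mul]; rfl
        rw [hπ z hz (Fq_ne_zero hz), ← w.mk_rep, Projectivization.mk_eq_mk_iff]
        refine ⟨Units.mk0 (mkQ c d) hcd0, ?_⟩
        rw [hFz]; funext i; simp [Units.smul_def, hvdef]
end
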